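/- arXiv:2401.08997 — 2 statements merged into one kernel-verified Lean document; each statement's English description precedes it below -/
import Mathlib

section
/- For every real number k and every complex number z with Im z > 0, P_k(z − 3/8) + P_k(z − 1/8) + P_k(z + 1/8) + P_k(z + 3/8) = 4·P_k(8z) − 4·(1 + 2^{−k} + 4^{−k}) · ( P_k(4z) − (1 + 2^{1−k})·P_k(8z) + 2^{1−k}·P_k(16z) ). -/
open Complex

/-- P_k(z) = Σ_{n=1}^∞ n^{−k} · e^{2πinz}/(1 − e^{2πinz}), for real k and Im z > 0. -/
noncomputable def P (k : ℝ) (z : ℂ) : ℂ :=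
  ∑' n : ℕ+, (n : ℂ) ^ (-(k : ℂ)) *
    (Complex.exp (2 * Real.pi * Complex.I * n * z) /
      (1 - Complex.exp (2 * Real.pi * Complex.I * n * z)))

/-! ### Pure algebra lemmas -/

lemma pairA (w x : ℂ) (h1 : 1 - x*w ≠ 0) (h2 : 1 + x*w ≠ 0) :
    x*w/(1-x*w) + x*(-w)/(1-x*(-w)) = 2*(w^2*x^2)/(1-w^2*x^2) := by
  have h3 : 1 - w^2*x^2 ≠ 0 := by
    rw [show (1 - w^2*x^2) = (1-x*w)*(1+x*w) by ring]
    exact mul_ne_zero h1 h2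
  rw [show (1-x*(-w)) = 1 + x*w by ring]
  field_simp
  rw [eq_div_iff (by rwa [mul_comm] at h3)]
  ring

lemma pairB (s y : ℂ) (hs : s^2 = -1) (h1 : 1 - s*y ≠ 0) (h2 : 1 + s*y ≠ 0) :
    2*(s*y)/(1-s*y) + 2*((-s)*y)/(1-(-s)*y) = -4*(y^2/(1+y^2)) := by
  have h3 : 1 + y^2 ≠ 0 := by
    rw [show (1 + y^2) = (1-s*y)*(1+s*y) by linear_combination (y^2)*hs]
    exact mul_ne_zero h1 h2
  rw [show (1-(-s)*y) = 1 + s*y by ring]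
  field_simp
  linear_combination (4*y^2) * hs

lemma lamconv (y : ℂ) (h5 : 1 - y ≠ 0) (h6 : 1 - y^2 ≠ 0) :
    -4*(y/(1+y)) = -4*(y/(1-y) - 2*(y^2/(1-y^2))) := by
  have h0 : 1 + y ≠ 0 := by
    intro h
    apply h6
    rw [show (1 - y^2) = (1-y)*(1+y) by ring, h, mul_zero]
  field_simp
  ring

lemma key_odd (x w : ℂ) (hw : w^4 = -1)
    (h1 : 1 - x*w ≠ 0) (h2 : 1 - x*(-w) ≠ 0) (h3 : 1 - x*w^3 ≠ 0) (h4 : 1 - x*(-w^3) ≠ 0)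
    (h5 : 1 - x^4 ≠ 0) (h6 : 1 - x^8 ≠ 0) :
    x*(-w)/(1-x*(-w)) + x*(-w^3)/(1-x*(-w^3)) + x*w/(1-x*w) + x*w^3/(1-x*w^3)
      = -4*(x^4/(1-x^4) - 2*(x^8/(1-x^8))) := by
  have h2' : 1 + x*w ≠ 0 := by rw [show (1:ℂ)+x*w = 1 - x*(-w) by ring]; exact h2
  have h4' : 1 + x*w^3 ≠ 0 := by rw [show (1:ℂ)+x*w^3 = 1 - x*(-w^3) by ring]; exact h4
  have A := pairA w x h1 h2'
  have B := pairA (w^3) x h3 h4'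
  rw [show x*(-w)/(1-x*(-w)) + x*(-w^3)/(1-x*(-w^3)) + x*w/(1-x*w) + x*w^3/(1-x*w^3)
      = (x*w/(1-x*w) + x*(-w)/(1-x*(-w))) + (x*(w^3)/(1-x*(w^3)) + x*(-(w^3))/(1-x*(-(w^3)))) by ring,
    A, B]
  have hB2 : (w^3)^2 = -(w^2) := by linear_combination (w^2) * hw
  rw [hB2]
  have hs : (w^2)^2 = -1 := by linear_combination hw
  have hn1 : 1 - (w^2)*x^2 ≠ 0 := by
    rw [show (1:ℂ) - w^2*x^2 = (1-x*w)*(1+x*w) by ring]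
    exact mul_ne_zero h1 h2'
  have hn2 : 1 + (w^2)*x^2 ≠ 0 := by
    rw [show (1:ℂ) + w^2*x^2 = (1-x*w^3)*(1+x*w^3) by linear_combination (x^2*w^2)*hw]
    exact mul_ne_zero h3 h4'
  have C := pairB (w^2) (x^2) hs hn1 hn2
  rw [show 2*(w^2*x^2)/(1-w^2*x^2) + 2*(-(w^2)*x^2)/(1- -(w^2)*x^2)
      = 2*(w^2*x^2)/(1-w^2*x^2) + 2*((-(w^2))*x^2)/(1-(-(w^2))*x^2) by ring_nf, C]
  rw [show ((x^2)^2 : ℂ) = x^4 by ring]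
  have := lamconv (x^4) h5 (by rw [show ((x^4)^2:ℂ) = x^8 by ring]; exact h6)
  rw [show ((x^4)^2:ℂ) = x^8 by ring] at this
  exact this

lemma key_two (x w : ℂ) (hw : w^2 = -1)
    (h1 : 1 - x*w ≠ 0) (h2 : 1 - x*(-w) ≠ 0) (h5 : 1 - x^2 ≠ 0) (h6 : 1 - x^4 ≠ 0) :
    x*w/(1-x*w) + x*(-w)/(1-x*(-w)) + x*w/(1-x*w) + x*(-w)/(1-x*(-w))
      = -4*(x^2/(1-x^2) - 2*(x^4/(1-x^4))) := by
  have h2' : 1 + x*w ≠ 0 := by rw [show (1:ℂ)+x*w = 1 - x*(-w) by ring]; exact h2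
  have A := pairA w x h1 h2'
  rw [show x*w/(1-x*w) + x*(-w)/(1-x*(-w)) + x*w/(1-x*w) + x*(-w)/(1-x*(-w))
      = (x*w/(1-x*w) + x*(-w)/(1-x*(-w))) + (x*w/(1-x*w) + x*(-w)/(1-x*(-w))) by ring, A, hw]
  have h0 : 1 + x^2 ≠ 0 := by
    intro h
    apply h6
    rw [show (1:ℂ) - x^4 = (1-x^2)*(1+x^2) by ring, h, mul_zero]
  field_simp
  rw [div_eq_iff (by rw [sub_neg_eq_add]; exact h0)]
  ring

lemma key_four (x : ℂ) (h5 : 1 - x ≠ 0) (h6 : 1 - x^2 ≠ 0) :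
    x*(-1)/(1-x*(-1)) + x*(-1)/(1-x*(-1)) + x*(-1)/(1-x*(-1)) + x*(-1)/(1-x*(-1))
      = -4*(x/(1-x) - 2*(x^2/(1-x^2))) := by
  have h0 : 1 + x ≠ 0 := by
    intro h
    apply h6
    rw [show (1:ℂ) - x^2 = (1-x)*(1+x) by ring, h, mul_zero]
  rw [show (1:ℂ)-x*(-1) = 1 + x by ring]
  field_simp
  ring

lemma key_zero (x : ℂ) :
    x*1/(1-x*1) + x*1/(1-x*1) + x*1/(1-x*1) + x*1/(1-x*1) = 4*(x/(1-x)) := by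
  rw [mul_one]
  ring

/-! ### Eighth roots of unity -/

noncomputable def rt (N : ℕ) : ℂ := Complex.exp (Real.pi * Complex.I * N / 4)

lemma exp_nat_two_pi (m : ℕ) : Complex.exp ((m:ℂ) * (2 * Real.pi * Complex.I)) = 1 := by
  have := Complex.exp_int_mul_two_pi_mul_I (m : ℤ)
  rw [show (((m:ℤ)):ℂ) = (m:ℂ) by push_cast; ring] at this
  rw [show (m:ℂ) * (2 * Real.pi * Complex.I) = (m:ℂ) * (2 * (Real.pi:ℂ) * Complex.I) by norm_num]
  exact this

lemma rt_pow_nat (N j : ℕ) : (rt N)^j = Complex.exp (Real.pi * Complex.I * N * j / 4) := by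
  rw [rt, ← Complex.exp_nat_mul]
  congr 1
  ring

lemma rt_odd (N : ℕ) (hN : N % 2 = 1) : (rt N)^4 = -1 := by
  have h : N = (N / 2) * 2 + 1 := by omega
  rw [rt_pow_nat]
  rw [show (Real.pi * Complex.I * N * (4:ℕ) / 4 : ℂ) = ((N/2 : ℕ):ℂ) * (2 * Real.pi * Complex.I) + Real.pi * Complex.I by
    nth_rewrite 1 [h]; push_cast; ring]
  rw [Complex.exp_add, exp_nat_two_pi, one_mul]
  exact_mod_cast Complex.exp_pi_mul_I

lemma rt_two (N : ℕ) (hN : N % 4 = 2) : (rt N)^2 = -1 := by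
  have h : N = (N / 4) * 4 + 2 := by omega
  rw [rt_pow_nat]
  rw [show (Real.pi * Complex.I * N * (2:ℕ) / 4 : ℂ) = ((N/4 : ℕ):ℂ) * (2 * Real.pi * Complex.I) + Real.pi * Complex.I by
    nth_rewrite 1 [h]; push_cast; ring]
  rw [Complex.exp_add, exp_nat_two_pi, one_mul]
  exact_mod_cast Complex.exp_pi_mul_I

lemma rt_four (N : ℕ) (hN : N % 8 = 4) : rt N = -1 := by
  have h : N = (N / 8) * 8 + 4 := by omega
  rw [rt]
  rw [show (Real.pi * Complex.I * N / 4 : ℂ) = ((N/8 : ℕ):ℂ) * (2 * Real.pi * Complex.I) + Real.pi * Complex.I by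
    nth_rewrite 1 [h]; push_cast; ring]
  rw [Complex.exp_add, exp_nat_two_pi, one_mul]
  exact_mod_cast Complex.exp_pi_mul_I

lemma rt_zero (N : ℕ) (hN : N % 8 = 0) : rt N = 1 := by
  have h : N = (N / 8) * 8 := by omega
  rw [rt]
  rw [show (Real.pi * Complex.I * N / 4 : ℂ) = ((N/8 : ℕ):ℂ) * (2 * Real.pi * Complex.I) by
    nth_rewrite 1 [h]; push_cast; ring]
  exact exp_nat_two_pi _

lemma zpow_neg3_of4 (w : ℂ) (hw : w^4 = -1) : w^(-3:ℤ) = -w := by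
  have h3 : w^(3:ℕ) * (-w) = 1 := by linear_combination -hw
  rw [show (-3:ℤ) = -(3:ℕ) by norm_num, zpow_neg, zpow_natCast]
  exact inv_eq_of_mul_eq_one_right h3

lemma zpow_neg1_of4 (w : ℂ) (hw : w^4 = -1) : w^(-1:ℤ) = -w^3 := by
  have h3 : w * (-w^3) = 1 := by linear_combination -hw
  rw [show (-1:ℤ) = -(1:ℕ) by norm_num, zpow_neg, zpow_natCast, pow_one]
  exact inv_eq_of_mul_eq_one_right h3

lemma zpow_neg3_of2 (w : ℂ) (hw : w^2 = -1) : w^(-3:ℤ) = w := by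
  have h3 : w^(3:ℕ) * w = 1 := by linear_combination (w^2-1) * hw
  rw [show (-3:ℤ) = -(3:ℕ) by norm_num, zpow_neg, zpow_natCast]
  exact inv_eq_of_mul_eq_one_right h3

lemma zpow_neg1_of2 (w : ℂ) (hw : w^2 = -1) : w^(-1:ℤ) = -w := by
  have h3 : w * (-w) = 1 := by linear_combination -hw
  rw [show (-1:ℤ) = -(1:ℕ) by norm_num, zpow_neg, zpow_natCast, pow_one]
  exact inv_eq_of_mul_eq_one_right h3

/-! ### Exponential basics -/

noncomputable def X (z : ℂ) (N : ℕ) : ℂ := Complex.exp (2 * Real.pi * Complex.I * N * z)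

lemma X_pow (z : ℂ) (N d : ℕ) : (X z N)^d = X z (d*N) := by
  rw [X, X, ← Complex.exp_nat_mul]
  congr 1
  push_cast
  ring

lemma rt_norm (N : ℕ) : ‖rt N‖ = 1 := by
  rw [rt, Complex.norm_exp]
  rw [show (Real.pi * Complex.I * N / 4 : ℂ).re = 0 by simp]
  exact Real.exp_zero

lemma exp_shift (z : ℂ) (N : ℕ) (a : ℤ) :
    Complex.exp (2*Real.pi*Complex.I*N*(z + a/8)) = X z N * (rt N)^a := by
  rw [X, rt, ← Complex.exp_int_mul, ← Complex.exp_add]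
  congr 1
  ring

lemma one_sub_ne (y : ℂ) (hy : ‖y‖ < 1) : 1 - y ≠ 0 := by
  intro h
  have : y = 1 := by linear_combination -h
  rw [this] at hy
  simp at hy

lemma norm_exp_eq (w : ℂ) (j : ℕ) :
    ‖Complex.exp (2*Real.pi*Complex.I*j*w)‖ = Real.exp (-(2*Real.pi*w.im)) ^ j := by
  rw [show (2*(Real.pi:ℂ)*Complex.I*j*w) = ((2*Real.pi*j : ℝ):ℂ) * (Complex.I * w) by push_cast; ring]
  rw [Complex.norm_exp]
  rw [Complex.re_ofReal_mul]
  rw [show (Complex.I * w).re = -w.im by simp]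
  rw [← Real.exp_nat_mul]
  congr 1
  ring

lemma norm_exp_lt_one (w : ℂ) (hw : 0 < w.im) (j : ℕ) (hj : 0 < j) :
    ‖Complex.exp (2*Real.pi*Complex.I*j*w)‖ < 1 := by
  rw [norm_exp_eq]
  have h1 : Real.exp (-(2*Real.pi*w.im)) < 1 := by
    rw [Real.exp_lt_one_iff]
    have := Real.pi_pos
    nlinarith
  calc Real.exp (-(2*Real.pi*w.im)) ^ j ≤ Real.exp (-(2*Real.pi*w.im)) ^ 1 := by
        apply pow_le_pow_of_le_one (Real.exp_nonneg _) h1.le hj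
    _ < 1 := by rwa [pow_one]

lemma X_norm_lt (z : ℂ) (hz : 0 < z.im) (N : ℕ) (hN : 0 < N) : ‖X z N‖ < 1 :=
  norm_exp_lt_one z hz N hN

/-! ### Summands -/

noncomputable def Psum (k : ℝ) (w : ℂ) (n : ℕ+) : ℂ :=
  (n : ℂ) ^ (-(k : ℂ)) *
    (Complex.exp (2 * Real.pi * Complex.I * n * w) /
      (1 - Complex.exp (2 * Real.pi * Complex.I * n * w)))

lemma P_eq (k : ℝ) (w : ℂ) : P k w = ∑' n : ℕ+, Psum k w n := rfl

noncomputable def Lz (z : ℂ) (j : ℕ) : ℂ := X z j / (1 - X z j)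

noncomputable def Fc (k : ℝ) (z : ℂ) (c : ℕ) (n : ℕ+) : ℂ :=
  (n : ℂ) ^ (-(k : ℂ)) * Lz z (c * (n:ℕ))

lemma P_scale (k : ℝ) (z : ℂ) (c : ℕ) : P k ((c:ℂ) * z) = ∑' n : ℕ+, Fc k z c n := by
  rw [P_eq]
  apply tsum_congr
  intro n
  unfold Psum Fc Lz X
  congr 2 <;> · congr 1; push_cast; ring

/-! ### Summability -/

lemma norm_cpow_le (k : ℝ) (n : ℕ) (hn : 0 < n) :
    ‖(n:ℂ)^(-(k:ℂ))‖ ≤ (n:ℝ)^(⌈-k⌉₊) := by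
  have hn' : (0:ℝ) < n := by exact_mod_cast hn
  rw [show ((n:ℂ)) = (((n:ℝ)):ℂ) by push_cast; ring]
  rw [Complex.norm_cpow_eq_rpow_re_of_pos hn']
  rw [show (-(k:ℂ)).re = -k by simp]
  calc (n:ℝ) ^ (-k) ≤ (n:ℝ) ^ ((⌈-k⌉₊ : ℝ)) := by
        apply Real.rpow_le_rpow_of_exponent_le (by exact_mod_cast hn) (Nat.le_ceil _)
    _ = (n:ℝ)^(⌈-k⌉₊) := by rw [Real.rpow_natCast]

lemma summable_P (k : ℝ) (w : ℂ) (hw : 0 < w.im) : Summable (Psum k w) := by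
  unfold Psum
  set r : ℝ := Real.exp (-(2*Real.pi*w.im)) with hr
  have hr0 : 0 ≤ r := Real.exp_nonneg _
  have hr1 : r < 1 := by
    rw [hr, Real.exp_lt_one_iff]
    have := Real.pi_pos
    nlinarith
  set K := ⌈-k⌉₊
  have hsum : Summable (fun n : ℕ => (n:ℝ)^K * r^n * (1-r)⁻¹) := by
    apply Summable.mul_right
    exact summable_pow_mul_geometric_of_norm_lt_one K (by rwa [Real.norm_eq_abs, _root_.abs_of_nonneg hr0])
  apply Summable.of_norm_bounded (hsum.comp_injective (PNat.coe_injective))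
  intro n
  have hn : 0 < (n:ℕ) := n.pos
  have hE : ‖Complex.exp (2*Real.pi*Complex.I*(n:ℕ)*w)‖ = r^(n:ℕ) := norm_exp_eq w n
  have hElt : ‖Complex.exp (2*Real.pi*Complex.I*(n:ℕ)*w)‖ < 1 := norm_exp_lt_one w hw n hn
  have hden : 1 - r^(n:ℕ) ≠ 0 := by
    have : r^(n:ℕ) < 1 := by rwa [← hE]
    linarith
  have hden2 : (0:ℝ) < 1 - r := by linarith
  have hdenle : 1 - r ≤ ‖1 - Complex.exp (2*Real.pi*Complex.I*(n:ℕ)*w)‖ := by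
    calc 1 - r ≤ 1 - r^(n:ℕ) := by
          have : r^(n:ℕ) ≤ r^1 := pow_le_pow_of_le_one hr0 hr1.le hn
          rw [pow_one] at this; linarith
      _ ≤ ‖1 - Complex.exp (2*Real.pi*Complex.I*(n:ℕ)*w)‖ := by
          have := norm_sub_norm_le (1:ℂ) (Complex.exp (2*Real.pi*Complex.I*(n:ℕ)*w))
          rw [norm_one, hE] at this
          linarith
  rw [norm_mul, norm_div]
  calc ‖(n:ℂ)^(-(k:ℂ))‖ * (‖Complex.exp (2*Real.pi*Complex.I*(n:ℕ)*w)‖ / ‖1 - Complex.exp (2*Real.pi*Complex.I*(n:ℕ)*w)‖)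
      ≤ ((n:ℕ):ℝ)^K * (r^(n:ℕ) / (1-r)) := by
        apply mul_le_mul (norm_cpow_le k n hn)
        · rw [hE]
          exact div_le_div_of_nonneg_left (pow_nonneg hr0 _) hden2 hdenle
        · positivity
        · positivity
    _ = ((n:ℕ):ℝ)^K * r^(n:ℕ) * (1-r)⁻¹ := by rw [div_eq_mul_inv]; ring

/-! ### Splitting -/

def OddS : Set ℕ+ := {n : ℕ+ | Odd (n:ℕ)}

noncomputable def doubleE : ℕ+ ≃ ↥(OddSᶜ) := by
  apply Equiv.ofBijective (fun m : ℕ+ => (⟨2*m, by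
    simp only [OddS, Set.mem_compl_iff, Set.mem_setOf_eq]
    intro h
    rcases h with ⟨t, ht⟩
    have : ((2*m : ℕ+):ℕ) = 2*(m:ℕ) := by push_cast; ring
    omega⟩ : ↥(OddSᶜ)))
  constructor
  · intro a b h
    have h2 : (2*a : ℕ+) = 2*b := congrArg Subtype.val h
    have h3 : ((2*a : ℕ+):ℕ) = ((2*b : ℕ+):ℕ) := congrArg _ h2
    have : (a:ℕ) = (b:ℕ) := by push_cast at h3; omega
    exact PNat.coe_injective this
  · rintro ⟨x, hx⟩
    simp only [OddS, Set.mem_compl_iff, Set.mem_setOf_eq] at hx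
    have hev : Even (x:ℕ) := Nat.not_odd_iff_even.mp hx
    rcases hev with ⟨t, ht⟩
    have hx1 : 1 ≤ (x:ℕ) := x.pos
    have ht1 : 0 < t := by omega
    set m : ℕ+ := ⟨t, ht1⟩ with hm
    refine ⟨m, ?_⟩
    apply Subtype.ext
    show (2 * m : ℕ+) = x
    apply PNat.coe_injective
    rw [PNat.mul_coe]
    have hmt : (m:ℕ) = t := rfl
    have h2 : ((2:ℕ+):ℕ) = 2 := rfl
    rw [hmt, h2]
    omega

lemma tsum_split (f : ℕ+ → ℂ) (hf : Summable f) :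
    ∑' n, f n = (∑' m : ↥OddS, f m) + ∑' m : ℕ+, f (2*m) := by
  rw [← Summable.tsum_subtype_add_tsum_subtype_compl hf OddS]
  congr 1
  rw [← (doubleE.tsum_eq (fun x : ↥(OddSᶜ) => f ↑x))]
  rfl

lemma inj2 : Function.Injective (fun n : ℕ+ => 2*n) := by
  intro a b h
  simp only at h
  have h3 : ((2*a : ℕ+):ℕ) = ((2*b : ℕ+):ℕ) := congrArg _ h
  have : (a:ℕ) = (b:ℕ) := by push_cast at h3; omega
  exact PNat.coe_injective this

/-! ### cpow facts -/

lemma cpow_nat (k : ℝ) (n : ℕ) : ((n:ℕ):ℂ)^(-(k:ℂ)) = (((n:ℝ)^(-k) : ℝ):ℂ) := by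
  rw [show ((n:ℕ):ℂ) = (((n:ℕ):ℝ):ℂ) by push_cast; ring,
    show -(k:ℂ) = ((-k:ℝ):ℂ) by push_cast; ring,
    ← Complex.ofReal_cpow (Nat.cast_nonneg n)]

lemma myCpowSplit (k : ℝ) (a b : ℕ) :
    ((a*b:ℕ):ℂ)^(-(k:ℂ)) = (((a:ℝ)^(-k):ℝ):ℂ) * ((b:ℕ):ℂ)^(-(k:ℂ)) := by
  rw [cpow_nat, cpow_nat]
  rw [show ((a*b:ℕ):ℝ) = (a:ℝ)*(b:ℝ) by push_cast; ring]
  rw [Real.mul_rpow (Nat.cast_nonneg a) (Nat.cast_nonneg b)]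
  push_cast
  ring

/-! ### The four shifted terms -/

noncomputable def G (k : ℝ) (z : ℂ) (n : ℕ+) : ℂ :=
  Psum k (z - 3/8) n + Psum k (z - 1/8) n + Psum k (z + 1/8) n + Psum k (z + 3/8) n

lemma Psum_shift (k : ℝ) (z : ℂ) (n : ℕ+) (a : ℤ) :
    Psum k (z + (a:ℂ)/8) n
      = (n:ℂ)^(-(k:ℂ)) * (X z (n:ℕ) * (rt (n:ℕ))^a / (1 - X z (n:ℕ) * (rt (n:ℕ))^a)) := by
  unfold Psum
  rw [show (2 * (Real.pi:ℂ) * Complex.I * (n:ℂ) * (z + (a:ℂ)/8))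
      = 2*Real.pi*Complex.I*((n:ℕ):ℂ)*(z + (a:ℂ)/8) by push_cast; ring]
  rw [exp_shift z (n:ℕ) a]

lemma G_odd (k : ℝ) (z : ℂ) (hz : 0 < z.im) (n : ℕ+) (hm : (n:ℕ) % 2 = 1) :
    G k z n = (n:ℂ)^(-(k:ℂ)) * (-4*(Lz z (4*(n:ℕ)) - 2*(Lz z (8*(n:ℕ))))) := by
  have e3 := Psum_shift k z n (-3)
  have e1 := Psum_shift k z n (-1)
  have p1 := Psum_shift k z n 1
  have p3 := Psum_shift k z n 3
  rw [show z + ((-3:ℤ):ℂ)/8 = z - 3/8 by push_cast; ring] at e3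
  rw [show z + ((-1:ℤ):ℂ)/8 = z - 1/8 by push_cast; ring] at e1
  rw [show z + ((1:ℤ):ℂ)/8 = z + 1/8 by push_cast; ring] at p1
  rw [show z + ((3:ℤ):ℂ)/8 = z + 3/8 by push_cast; ring] at p3
  set w := rt (n:ℕ) with hwdef
  have hw : w^4 = -1 := rt_odd _ hm
  rw [zpow_neg3_of4 w hw] at e3
  rw [zpow_neg1_of4 w hw] at e1
  rw [show (w:ℂ)^(1:ℤ) = w from zpow_one w] at p1
  rw [show (w:ℂ)^(3:ℤ) = w^3 by rw [show (3:ℤ) = ((3:ℕ):ℤ) by norm_num, zpow_natCast]] at p3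
  set x := X z (n:ℕ) with hxdef
  have hx : ‖x‖ < 1 := X_norm_lt z hz _ n.pos
  have hwn : ‖w‖ = 1 := rt_norm _
  have hne : ∀ u : ℂ, ‖u‖ = 1 → 1 - x*u ≠ 0 := by
    intro u hu; exact one_sub_ne _ (by rw [norm_mul, hu, mul_one]; exact hx)
  have h1 := hne w hwn
  have h2 := hne (-w) (by rw [norm_neg]; exact hwn)
  have h3 := hne (w^3) (by rw [norm_pow, hwn, one_pow])
  have h4 := hne (-w^3) (by rw [norm_neg, norm_pow, hwn, one_pow])
  have h5 : 1 - x^4 ≠ 0 := one_sub_ne _ (by rw [norm_pow]; exact pow_lt_one₀ (norm_nonneg _) hx (by norm_num))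
  have h6 : 1 - x^8 ≠ 0 := one_sub_ne _ (by rw [norm_pow]; exact pow_lt_one₀ (norm_nonneg _) hx (by norm_num))
  have key := key_odd x w hw h1 h2 h3 h4 h5 h6
  unfold G
  rw [e3, e1, p1, p3]
  calc (n:ℂ)^(-(k:ℂ))*(x*(-w)/(1-x*(-w))) + (n:ℂ)^(-(k:ℂ))*(x*(-w^3)/(1-x*(-w^3)))
        + (n:ℂ)^(-(k:ℂ))*(x*w/(1-x*w)) + (n:ℂ)^(-(k:ℂ))*(x*w^3/(1-x*w^3))
      = (n:ℂ)^(-(k:ℂ)) * (x*(-w)/(1-x*(-w)) + x*(-w^3)/(1-x*(-w^3)) + x*w/(1-x*w) + x*w^3/(1-x*w^3)) := by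
        ring
    _ = (n:ℂ)^(-(k:ℂ)) * (-4*(x^4/(1-x^4) - 2*(x^8/(1-x^8)))) := by rw [key]
    _ = (n:ℂ)^(-(k:ℂ)) * (-4*(Lz z (4*(n:ℕ)) - 2*(Lz z (8*(n:ℕ))))) := by
        rw [hxdef, X_pow, X_pow]; rfl

lemma G_two (k : ℝ) (z : ℂ) (hz : 0 < z.im) (n : ℕ+) (hm : (n:ℕ) % 4 = 2) :
    G k z n = (n:ℂ)^(-(k:ℂ)) * (-4*(Lz z (2*(n:ℕ)) - 2*(Lz z (4*(n:ℕ))))) := by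
  have e3 := Psum_shift k z n (-3)
  have e1 := Psum_shift k z n (-1)
  have p1 := Psum_shift k z n 1
  have p3 := Psum_shift k z n 3
  rw [show z + ((-3:ℤ):ℂ)/8 = z - 3/8 by push_cast; ring] at e3
  rw [show z + ((-1:ℤ):ℂ)/8 = z - 1/8 by push_cast; ring] at e1
  rw [show z + ((1:ℤ):ℂ)/8 = z + 1/8 by push_cast; ring] at p1
  rw [show z + ((3:ℤ):ℂ)/8 = z + 3/8 by push_cast; ring] at p3
  set w := rt (n:ℕ) with hwdef
  have hw : w^2 = -1 := rt_two _ hm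
  rw [zpow_neg3_of2 w hw] at e3
  rw [zpow_neg1_of2 w hw] at e1
  rw [show (w:ℂ)^(1:ℤ) = w from zpow_one w] at p1
  rw [show (w:ℂ)^(3:ℤ) = -w by
    rw [show (3:ℤ) = ((3:ℕ):ℤ) by norm_num, zpow_natCast]; linear_combination w*hw] at p3
  set x := X z (n:ℕ) with hxdef
  have hx : ‖x‖ < 1 := X_norm_lt z hz _ n.pos
  have hwn : ‖w‖ = 1 := rt_norm _
  have hne : ∀ u : ℂ, ‖u‖ = 1 → 1 - x*u ≠ 0 := by
    intro u hu; exact one_sub_ne _ (by rw [norm_mul, hu, mul_one]; exact hx)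
  have h1 := hne w hwn
  have h2 := hne (-w) (by rw [norm_neg]; exact hwn)
  have h5 : 1 - x^2 ≠ 0 := one_sub_ne _ (by rw [norm_pow]; exact pow_lt_one₀ (norm_nonneg _) hx (by norm_num))
  have h6 : 1 - x^4 ≠ 0 := one_sub_ne _ (by rw [norm_pow]; exact pow_lt_one₀ (norm_nonneg _) hx (by norm_num))
  have key := key_two x w hw h1 h2 h5 h6
  unfold G
  rw [e3, e1, p1, p3]
  calc (n:ℂ)^(-(k:ℂ))*(x*w/(1-x*w)) + (n:ℂ)^(-(k:ℂ))*(x*(-w)/(1-x*(-w)))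
        + (n:ℂ)^(-(k:ℂ))*(x*w/(1-x*w)) + (n:ℂ)^(-(k:ℂ))*(x*(-w)/(1-x*(-w)))
      = (n:ℂ)^(-(k:ℂ)) * (x*w/(1-x*w) + x*(-w)/(1-x*(-w)) + x*w/(1-x*w) + x*(-w)/(1-x*(-w))) := by
        ring
    _ = (n:ℂ)^(-(k:ℂ)) * (-4*(x^2/(1-x^2) - 2*(x^4/(1-x^4)))) := by rw [key]
    _ = (n:ℂ)^(-(k:ℂ)) * (-4*(Lz z (2*(n:ℕ)) - 2*(Lz z (4*(n:ℕ))))) := by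
        rw [hxdef, X_pow, X_pow]; rfl

lemma G_four (k : ℝ) (z : ℂ) (hz : 0 < z.im) (n : ℕ+) (hm : (n:ℕ) % 8 = 4) :
    G k z n = (n:ℂ)^(-(k:ℂ)) * (-4*(Lz z (n:ℕ) - 2*(Lz z (2*(n:ℕ))))) := by
  have e3 := Psum_shift k z n (-3)
  have e1 := Psum_shift k z n (-1)
  have p1 := Psum_shift k z n 1
  have p3 := Psum_shift k z n 3
  rw [show z + ((-3:ℤ):ℂ)/8 = z - 3/8 by push_cast; ring] at e3
  rw [show z + ((-1:ℤ):ℂ)/8 = z - 1/8 by push_cast; ring] at e1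
  rw [show z + ((1:ℤ):ℂ)/8 = z + 1/8 by push_cast; ring] at p1
  rw [show z + ((3:ℤ):ℂ)/8 = z + 3/8 by push_cast; ring] at p3
  rw [rt_four _ hm] at e3 e1 p1 p3
  rw [show ((-1:ℂ))^(-3:ℤ) = -1 by
    rw [zpow_neg, show (3:ℤ) = ((3:ℕ):ℤ) by norm_num, zpow_natCast]; norm_num] at e3
  rw [show ((-1:ℂ))^(-1:ℤ) = -1 by
    rw [zpow_neg, show (1:ℤ) = ((1:ℕ):ℤ) by norm_num, zpow_natCast]; norm_num] at e1
  rw [show ((-1:ℂ))^(1:ℤ) = -1 from zpow_one _] at p1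
  rw [show ((-1:ℂ))^(3:ℤ) = -1 by
    rw [show (3:ℤ) = ((3:ℕ):ℤ) by norm_num, zpow_natCast]; norm_num] at p3
  set x := X z (n:ℕ) with hxdef
  have hx : ‖x‖ < 1 := X_norm_lt z hz _ n.pos
  have h5 : 1 - x ≠ 0 := one_sub_ne _ hx
  have h6 : 1 - x^2 ≠ 0 := one_sub_ne _ (by rw [norm_pow]; exact pow_lt_one₀ (norm_nonneg _) hx (by norm_num))
  have key := key_four x h5 h6
  unfold G
  rw [e3, e1, p1, p3]
  calc (n:ℂ)^(-(k:ℂ))*(x*(-1)/(1-x*(-1))) + (n:ℂ)^(-(k:ℂ))*(x*(-1)/(1-x*(-1)))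
        + (n:ℂ)^(-(k:ℂ))*(x*(-1)/(1-x*(-1))) + (n:ℂ)^(-(k:ℂ))*(x*(-1)/(1-x*(-1)))
      = (n:ℂ)^(-(k:ℂ)) * (x*(-1)/(1-x*(-1)) + x*(-1)/(1-x*(-1)) + x*(-1)/(1-x*(-1)) + x*(-1)/(1-x*(-1))) := by
        ring
    _ = (n:ℂ)^(-(k:ℂ)) * (-4*(x/(1-x) - 2*(x^2/(1-x^2)))) := by rw [key]
    _ = (n:ℂ)^(-(k:ℂ)) * (-4*(Lz z (n:ℕ) - 2*(Lz z (2*(n:ℕ))))) := by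
        rw [hxdef, X_pow]; rfl

lemma G_zero (k : ℝ) (z : ℂ) (n : ℕ+) (hm : (n:ℕ) % 8 = 0) :
    G k z n = (n:ℂ)^(-(k:ℂ)) * (4*(Lz z (n:ℕ))) := by
  have e3 := Psum_shift k z n (-3)
  have e1 := Psum_shift k z n (-1)
  have p1 := Psum_shift k z n 1
  have p3 := Psum_shift k z n 3
  rw [show z + ((-3:ℤ):ℂ)/8 = z - 3/8 by push_cast; ring] at e3
  rw [show z + ((-1:ℤ):ℂ)/8 = z - 1/8 by push_cast; ring] at e1
  rw [show z + ((1:ℤ):ℂ)/8 = z + 1/8 by push_cast; ring] at p1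
  rw [show z + ((3:ℤ):ℂ)/8 = z + 3/8 by push_cast; ring] at p3
  rw [rt_zero _ hm] at e3 e1 p1 p3
  rw [one_zpow] at e3 e1 p1 p3
  set x := X z (n:ℕ) with hxdef
  have key := key_zero x
  unfold G
  rw [e3, e1, p1, p3]
  calc (n:ℂ)^(-(k:ℂ))*(x*1/(1-x*1)) + (n:ℂ)^(-(k:ℂ))*(x*1/(1-x*1))
        + (n:ℂ)^(-(k:ℂ))*(x*1/(1-x*1)) + (n:ℂ)^(-(k:ℂ))*(x*1/(1-x*1))
      = (n:ℂ)^(-(k:ℂ)) * (x*1/(1-x*1) + x*1/(1-x*1) + x*1/(1-x*1) + x*1/(1-x*1)) := by ring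
    _ = (n:ℂ)^(-(k:ℂ)) * (4*(x/(1-x))) := by rw [key]
    _ = (n:ℂ)^(-(k:ℂ)) * (4*(Lz z (n:ℕ))) := rfl

noncomputable def Hf (k : ℝ) (z : ℂ) (m : ℕ+) : ℂ :=
  (m:ℂ)^(-(k:ℂ)) * (-4*(Lz z (4*(m:ℕ)) - 2*(Lz z (8*(m:ℕ)))))

lemma Fc_eq_Psum (k : ℝ) (z : ℂ) (c : ℕ) : Fc k z c = Psum k ((c:ℂ)*z) := by
  funext n
  unfold Psum Fc Lz X
  congr 2 <;> · congr 1; push_cast; ring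

lemma summable_Fc (k : ℝ) (z : ℂ) (hz : 0 < z.im) (c : ℕ) (hc : 0 < c) :
    Summable (Fc k z c) := by
  rw [Fc_eq_Psum]
  apply summable_P
  rw [show ((c:ℂ)*z).im = c * z.im by simp]
  positivity

lemma Hf_eq (k : ℝ) (z : ℂ) (m : ℕ+) :
    Hf k z m = -4 * (Fc k z 4 m - 2 * Fc k z 8 m) := by
  unfold Hf Fc
  ring

lemma Fc_double (k : ℝ) (z : ℂ) (c : ℕ) (m : ℕ+) :
    Fc k z c (2*m) = (((2:ℝ)^(-k):ℝ):ℂ) * Fc k z (2*c) m := by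
  unfold Fc
  rw [show c * ((2*m:ℕ+):ℕ) = (2*c) * ((m:ℕ+):ℕ) by push_cast; ring]
  rw [show ((2*m:ℕ+):ℂ) = ((2*((m:ℕ+):ℕ):ℕ):ℂ) by push_cast; ring]
  rw [myCpowSplit]
  ring

lemma inj4 : Function.Injective (fun n : ℕ+ => 4*n) := by
  intro a b h
  simp only at h
  have h3 : ((4*a : ℕ+):ℕ) = ((4*b : ℕ+):ℕ) := congrArg _ h
  have : (a:ℕ) = (b:ℕ) := by push_cast at h3; omega
  exact PNat.coe_injective this

theorem octupling (k : ℝ) (z : ℂ) (hz : 0 < z.im) :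
    P k (z - 3 / 8) + P k (z - 1 / 8) + P k (z + 1 / 8) + P k (z + 3 / 8) =
      4 * P k (8 * z)
        - 4 * (1 + (((2 : ℝ) ^ (-k) : ℝ) : ℂ) + (((4 : ℝ) ^ (-k) : ℝ) : ℂ)) *
            (P k (4 * z) - (1 + (((2 : ℝ) ^ (1 - k) : ℝ) : ℂ)) * P k (8 * z)
              + (((2 : ℝ) ^ (1 - k) : ℝ) : ℂ) * P k (16 * z)) := by
  have him : ∀ a : ℝ, (z + (a:ℂ)).im = z.im := by intro a; simp
  have him1 : (0:ℝ) < (z - 3/8).im := by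
    rw [show z - 3/8 = z + ((-3/8 : ℝ):ℂ) by push_cast; ring, him]; exact hz
  have him2 : (0:ℝ) < (z - 1/8).im := by
    rw [show z - 1/8 = z + ((-1/8 : ℝ):ℂ) by push_cast; ring, him]; exact hz
  have him3 : (0:ℝ) < (z + 1/8).im := by
    rw [show z + 1/8 = z + ((1/8 : ℝ):ℂ) by push_cast; ring, him]; exact hz
  have him4 : (0:ℝ) < (z + 3/8).im := by
    rw [show z + 3/8 = z + ((3/8 : ℝ):ℂ) by push_cast; ring, him]; exact hz
  have s1 := summable_P k (z - 3/8) him1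
  have s2 := summable_P k (z - 1/8) him2
  have s3 := summable_P k (z + 1/8) him3
  have s4 := summable_P k (z + 3/8) him4
  have hG : Summable (G k z) := by
    unfold G
    exact ((s1.add s2).add s3).add s4
  -- LHS as a single tsum
  have hLHS : P k (z - 3/8) + P k (z - 1/8) + P k (z + 1/8) + P k (z + 3/8)
      = ∑' n, G k z n := by
    rw [P_eq, P_eq, P_eq, P_eq, ← Summable.tsum_add s1 s2, ← Summable.tsum_add (s1.add s2) s3,
      ← Summable.tsum_add ((s1.add s2).add s3) s4]
    rfl
  -- splits
  have hG2 : Summable (fun n : ℕ+ => G k z (2*n)) := hG.comp_injective inj2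
  have hG4 : Summable (fun n : ℕ+ => G k z (4*n)) := hG.comp_injective inj4
  have hsp1 := tsum_split (G k z) hG
  have hsp2 := tsum_split (fun n : ℕ+ => G k z (2*n)) hG2
  have hsp3 := tsum_split (fun n : ℕ+ => G k z (4*n)) hG4
  have h22 : ∀ m : ℕ+, (2*(2*m) : ℕ+) = 4*m := by
    intro m; apply PNat.coe_injective; push_cast; ring
  have h42 : ∀ m : ℕ+, (4*(2*m) : ℕ+) = 8*m := by
    intro m; apply PNat.coe_injective; push_cast; ring
  rw [show (fun n : ℕ+ => G k z (2*(2*n))) = (fun n : ℕ+ => G k z (4*n)) from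
    funext (fun n => congrArg (G k z) (h22 n))] at hsp2
  rw [show (fun n : ℕ+ => G k z (4*(2*n))) = (fun n : ℕ+ => G k z (8*n)) from
    funext (fun n => congrArg (G k z) (h42 n))] at hsp3
  -- evaluate the four pieces
  have hO1 : (∑' m : ↥OddS, G k z ↑m) = ∑' m : ↥OddS, Hf k z ↑m :=
    tsum_congr (fun m => by
      have hmod : ((m:ℕ+):ℕ) % 2 = 1 := Nat.odd_iff.mp m.2
      rw [G_odd k z hz _ hmod]
      rfl)
  have hO2 : (∑' m : ↥OddS, G k z (2*↑m)) = ∑' m : ↥OddS, (((2:ℝ)^(-k):ℝ):ℂ) * Hf k z ↑m :=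
    tsum_congr (fun m => by
      have hodd : ((m:ℕ+):ℕ) % 2 = 1 := Nat.odd_iff.mp m.2
      have hmod : ((2*(m:ℕ+) : ℕ+):ℕ) % 4 = 2 := by push_cast; omega
      rw [G_two k z hz _ hmod]
      rw [show 2*((2*(m:ℕ+) : ℕ+):ℕ) = 4*((m:ℕ+):ℕ) by push_cast; ring]
      rw [show 4*((2*(m:ℕ+) : ℕ+):ℕ) = 8*((m:ℕ+):ℕ) by push_cast; ring]
      rw [show ((2*(m:ℕ+):ℕ+):ℂ) = ((2*((m:ℕ+):ℕ):ℕ):ℂ) by push_cast; ring]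
      rw [myCpowSplit]
      unfold Hf
      ring)
  have hO4 : (∑' m : ↥OddS, G k z (4*↑m)) = ∑' m : ↥OddS, (((4:ℝ)^(-k):ℝ):ℂ) * Hf k z ↑m :=
    tsum_congr (fun m => by
      have hodd : ((m:ℕ+):ℕ) % 2 = 1 := Nat.odd_iff.mp m.2
      have hmod : ((4*(m:ℕ+) : ℕ+):ℕ) % 8 = 4 := by push_cast; omega
      rw [G_four k z hz _ hmod]
      rw [show ((4*(m:ℕ+) : ℕ+):ℕ) = 4*((m:ℕ+):ℕ) by push_cast; ring]
      rw [show 2*(4*((m:ℕ+):ℕ)) = 8*((m:ℕ+):ℕ) by ring]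
      rw [myCpowSplit]
      unfold Hf
      ring)
  have hE8 : (∑' n : ℕ+, G k z (8*n)) = ∑' n : ℕ+, (((8:ℝ)^(-k):ℝ):ℂ) * (4 * Fc k z 8 n) :=
    tsum_congr (fun n => by
      have hmod : ((8*n : ℕ+):ℕ) % 8 = 0 := by push_cast; omega
      rw [G_zero k z _ hmod]
      rw [show ((8*n : ℕ+):ℕ) = 8*((n:ℕ+):ℕ) by push_cast; ring]
      rw [myCpowSplit]
      unfold Fc
      ring)
  -- summability of Fc families
  have hFc4 := summable_Fc k z hz 4 (by norm_num)
  have hFc8 := summable_Fc k z hz 8 (by norm_num)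
  have hFc4s : Summable (fun m : ↥OddS => Fc k z 4 ↑m) := hFc4.subtype OddS
  have hFc8s : Summable (fun m : ↥OddS => Fc k z 8 ↑m) := hFc8.subtype OddS
  have hSH : (∑' m : ↥OddS, Hf k z ↑m)
      = -4 * ((∑' m : ↥OddS, Fc k z 4 ↑m) - 2 * (∑' m : ↥OddS, Fc k z 8 ↑m)) := by
    calc (∑' m : ↥OddS, Hf k z ↑m)
        = ∑' m : ↥OddS, (-4 : ℂ) * (Fc k z 4 ↑m - 2 * Fc k z 8 ↑m) :=
          tsum_congr (fun m => Hf_eq k z ↑m)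
      _ = -4 * ∑' m : ↥OddS, (Fc k z 4 ↑m - 2 * Fc k z 8 ↑m) := tsum_mul_left
      _ = -4 * ((∑' m : ↥OddS, Fc k z 4 ↑m) - 2 * (∑' m : ↥OddS, Fc k z 8 ↑m)) := by
          rw [Summable.tsum_sub hFc4s (hFc8s.mul_left 2), tsum_mul_left]
  -- doubling relations
  have hol4 : (∑' n : ℕ+, Fc k z 4 n)
      = (∑' m : ↥OddS, Fc k z 4 ↑m) + (((2:ℝ)^(-k):ℝ):ℂ) * ∑' n : ℕ+, Fc k z 8 n := by
    have e4 := tsum_split (Fc k z 4) hFc4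
    have e4' : (∑' m : ℕ+, Fc k z 4 (2*m)) = (((2:ℝ)^(-k):ℝ):ℂ) * ∑' n : ℕ+, Fc k z 8 n := by
      rw [← tsum_mul_left]
      apply tsum_congr
      intro m
      have h := Fc_double k z 4 m
      rw [show (2*4:ℕ) = 8 by norm_num] at h
      exact h
    rw [e4, e4']
  have hol8 : (∑' n : ℕ+, Fc k z 8 n)
      = (∑' m : ↥OddS, Fc k z 8 ↑m) + (((2:ℝ)^(-k):ℝ):ℂ) * ∑' n : ℕ+, Fc k z 16 n := by
    have e8 := tsum_split (Fc k z 8) hFc8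
    have e8' : (∑' m : ℕ+, Fc k z 8 (2*m)) = (((2:ℝ)^(-k):ℝ):ℂ) * ∑' n : ℕ+, Fc k z 16 n := by
      rw [← tsum_mul_left]
      apply tsum_congr
      intro m
      have h := Fc_double k z 8 m
      rw [show (2*8:ℕ) = 16 by norm_num] at h
      exact h
    rw [e8, e8']
  -- P values
  have hp4 : P k (4*z) = ∑' n : ℕ+, Fc k z 4 n := by
    rw [show (4:ℂ) = ((4:ℕ):ℂ) by norm_num]; exact P_scale k z 4
  have hp8 : P k (8*z) = ∑' n : ℕ+, Fc k z 8 n := by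
    rw [show (8:ℂ) = ((8:ℕ):ℂ) by norm_num]; exact P_scale k z 8
  have hp16 : P k (16*z) = ∑' n : ℕ+, Fc k z 16 n := by
    rw [show (16:ℂ) = ((16:ℕ):ℂ) by norm_num]; exact P_scale k z 16
  -- coefficient facts
  have hA4 : (((4:ℝ)^(-k):ℝ):ℂ) = (((2:ℝ)^(-k):ℝ):ℂ)^2 := by
    have h : (4:ℝ)^(-k) = ((2:ℝ)^(-k))^2 := by
      rw [show (4:ℝ) = 2*2 by norm_num, Real.mul_rpow (by norm_num) (by norm_num)]; ring
    rw [h]; push_cast; ring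
  have hA8 : (((8:ℝ)^(-k):ℝ):ℂ) = (((2:ℝ)^(-k):ℝ):ℂ)^3 := by
    have h : (8:ℝ)^(-k) = ((2:ℝ)^(-k))^3 := by
      rw [show (8:ℝ) = 2*(2*2) by norm_num, Real.mul_rpow (by norm_num) (by norm_num),
        Real.mul_rpow (by norm_num) (by norm_num)]
      ring
    rw [h]; push_cast; ring
  have hD : (((2:ℝ)^(1-k):ℝ):ℂ) = 2 * (((2:ℝ)^(-k):ℝ):ℂ) := by
    have h : (2:ℝ)^(1-k) = 2 * (2:ℝ)^(-k) := by
      rw [show (1-k : ℝ) = 1 + (-k) by ring, Real.rpow_add (by norm_num), Real.rpow_one]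
    rw [h]; push_cast; ring
  -- assemble
  rw [hLHS, hsp1, hsp2, hsp3, hO1, hO2, hO4, hE8, tsum_mul_left, tsum_mul_left, tsum_mul_left,
    tsum_mul_left, hSH, hp4, hp8, hp16, hA4, hA8, hD]
  set A2 : ℂ := (((2:ℝ)^(-k):ℝ):ℂ)
  set OL4 : ℂ := ∑' m : ↥OddS, Fc k z 4 ↑m
  set OL8 : ℂ := ∑' m : ↥OddS, Fc k z 8 ↑m
  set T4 : ℂ := ∑' n : ℕ+, Fc k z 4 n
  set T8 : ℂ := ∑' n : ℕ+, Fc k z 8 n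
  set T16 : ℂ := ∑' n : ℕ+, Fc k z 16 n
  linear_combination (4*(1+A2+A2^2))*hol4 - (8*(1+A2+A2^2))*hol8
end

section
/- For every real number k and every complex number z with Im z > 0, P_k(z − 1/6) + P_k(z + 1/6) = P_k(z) + 2^{1−k}·P_k(4z) + 3^{1−k}·P_k(9z) − (2^k + 1)·( 2^{1−k}·P_k(2z) + 6^{1−k}·P_k(18z) ) − (3^k + 1)·( 3^{1−k}·P_k(3z) + 6^{1−k}·P_k(12z) ) + 6^{1−k}·( (2^k + 1)·(3^k + 1)·P_k(6z) + P_k(36z) ). -/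
open Complex Real

private noncomputable def Aq (x : ℂ) : ℂ := x / (1 - x)

private noncomputable def aco (k : ℝ) (n : ℕ+) : ℂ := (n : ℂ) ^ (-(k : ℂ))

private noncomputable def xe (z : ℂ) (n : ℕ+) : ℂ := Complex.exp (2*π*I*n*z)

private lemma i2 (x : ℂ) (h1 : 1 - x ≠ 0) (h2 : 1 + x ≠ 0) :
    Aq (-x) = 2 * Aq (x^2) - Aq x := by
  have h3 : 1 - x^2 ≠ 0 := by
    intro h; apply h1
    have he : (1 - x) * (1 + x) = 1 - x^2 := by ring
    rcases mul_eq_zero.1 (he.trans h) with h' | h'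
    · exact h'
    · exact absurd h' h2
  have h2' : 1 - -x ≠ 0 := by rwa [sub_neg_eq_add]
  unfold Aq
  field_simp
  ring

private lemma i3 (ω x : ℂ) (hω : ω^3 = 1) (hs : 1 + ω + ω^2 = 0)
    (h1 : 1 - x ≠ 0) (h2 : 1 - ω*x ≠ 0) (h3 : 1 - ω^2*x ≠ 0) :
    Aq x + Aq (ω*x) + Aq (ω^2*x) = 3 * Aq (x^3) := by
  have hd : 1 - x^3 = (1-x)*(1-ω*x)*(1-ω^2*x) := by
    linear_combination (-x^2 + x^3)*hω + (x - x^2)*hs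
  have h4 : 1 - x^3 ≠ 0 := by rw [hd]; exact mul_ne_zero (mul_ne_zero h1 h2) h3
  unfold Aq
  rw [div_add_div _ _ h1 h2, div_add_div _ _ (mul_ne_zero h1 h2) h3, mul_div_assoc',
    div_eq_div_iff (mul_ne_zero (mul_ne_zero h1 h2) h3) h4]
  linear_combination (3*x^3*ω - 2*x^2*ω - x^5*ω + x + 2*x^4 - 3*x^3)*hs

private lemma one_sub_ne_s11 {u : ℂ} (h : ‖u‖ < 1) : 1 - u ≠ 0 := by
  intro h0
  have : u = 1 := by linear_combination -h0
  rw [this] at h; simp at h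

private lemma norm_e (n : ℕ+) (w : ℂ) :
    ‖Complex.exp (2*π*I*n*w)‖ = Real.exp (-(2*π*w.im)) ^ (n:ℕ) := by
  rw [Complex.norm_exp, ← Real.exp_nat_mul]
  congr 1
  have : (2*(π:ℂ)*I*n*w) = (((n:ℕ):ℝ):ℂ) * ((2*(π:ℝ):ℝ):ℂ) * (w.re + w.im*I) * I := by
    push_cast
    rw [Complex.re_add_im]
    ring
  rw [this]
  simp [Complex.mul_re, Complex.mul_im]
  ring

private lemma norm_e_lt (n : ℕ+) (w : ℂ) (hw : 0 < w.im) :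
    ‖Complex.exp (2*π*I*n*w)‖ < 1 := by
  rw [norm_e]
  apply pow_lt_one₀ (Real.exp_pos _).le _ (by exact_mod_cast n.ne_zero)
  rw [Real.exp_lt_one_iff]
  have : 0 < 2*π*w.im := by positivity
  linarith

private lemma summable_norm_aux (k : ℝ) (w : ℂ) (hw : 0 < w.im) :
    Summable (fun n : ℕ+ => ‖(n : ℂ) ^ (-(k:ℂ)) * Aq (Complex.exp (2*π*I*n*w))‖) := by
  set r : ℝ := Real.exp (-(2*π*w.im)) with hr
  have hr0 : 0 < r := Real.exp_pos _
  have hr1 : r < 1 := by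
    rw [hr, Real.exp_lt_one_iff]
    have : 0 < 2*π*w.im := by positivity
    linarith
  set M : ℕ := ⌈-k⌉₊ with hM
  have hbig : Summable (fun n : ℕ => ((n:ℝ)^M * r^n) * (1/(1-r))) := by
    apply Summable.mul_right
    have := summable_pow_mul_geometric_of_norm_lt_one (R := ℝ) M
      (by rwa [Real.norm_eq_abs, abs_of_pos hr0])
    simpa using this
  have hbig' : Summable (fun n : ℕ+ => ((((n:ℕ)):ℝ)^M * r^((n:ℕ))) * (1/(1-r))) :=
    hbig.comp_injective PNat.coe_injective
  apply Summable.of_nonneg_of_le (fun n => norm_nonneg _) _ hbig'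
  intro n
  rw [norm_mul]
  have h1 : ‖(n : ℂ) ^ (-(k:ℂ))‖ ≤ ((n:ℕ):ℝ)^M := by
    have hpos : (0:ℝ) < ((n:ℕ):ℝ) := by exact_mod_cast n.pos
    rw [show ((n:ℂ)) = ((((n:ℕ):ℝ)):ℂ) by push_cast; ring]
    rw [Complex.norm_cpow_eq_rpow_re_of_pos hpos]
    simp only [Complex.neg_re, Complex.ofReal_re]
    calc ((n:ℕ):ℝ) ^ (-k) ≤ ((n:ℕ):ℝ) ^ (M:ℝ) := by
          apply Real.rpow_le_rpow_of_exponent_le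
          · exact_mod_cast n.one_le
          · exact Nat.le_ceil _
      _ = ((n:ℕ):ℝ)^M := Real.rpow_natCast _ _
  have h2 : ‖Aq (Complex.exp (2*π*I*n*w))‖ ≤ r^((n:ℕ)) * (1/(1-r)) := by
    unfold Aq
    rw [norm_div]
    have he : ‖Complex.exp (2*π*I*n*w)‖ = r ^ (n:ℕ) := norm_e n w
    have hrn_le : r ^ (n:ℕ) ≤ r := by
      calc r ^ (n:ℕ) ≤ r^1 := pow_le_pow_of_le_one hr0.le hr1.le n.one_le
        _ = r := pow_one r
    have hden : 1 - r ≤ ‖1 - Complex.exp (2*π*I*n*w)‖ := by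
      calc 1 - r ≤ 1 - ‖Complex.exp (2*π*I*n*w)‖ := by rw [he]; linarith
        _ ≤ ‖(1:ℂ)‖ - ‖Complex.exp (2*π*I*n*w)‖ := by simp
        _ ≤ ‖1 - Complex.exp (2*π*I*n*w)‖ := norm_sub_norm_le _ _
    rw [he, mul_one_div, div_eq_mul_inv, div_eq_mul_inv]
    have hinv : ‖1 - Complex.exp (2*π*I*n*w)‖⁻¹ ≤ (1-r)⁻¹ :=
      inv_anti₀ (by linarith) hden
    exact mul_le_mul_of_nonneg_left hinv (by positivity)
  calc ‖(n : ℂ) ^ (-(k:ℂ))‖ * ‖Aq (Complex.exp (2*π*I*n*w))‖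
      ≤ ((n:ℕ):ℝ)^M * (r^((n:ℕ)) * (1/(1-r))) := by
        apply mul_le_mul h1 h2 (norm_nonneg _) (by positivity)
    _ = ((n:ℕ):ℝ)^M * r^((n:ℕ)) * (1/(1-r)) := by ring

/-- x_n^C = exp(2πin(Cz)) -/
private lemma xe_pow (z : ℂ) (n : ℕ+) (C : ℕ) :
    xe z n ^ C = Complex.exp (2*π*I*n*((C:ℂ)*z)) := by
  unfold xe
  rw [← Complex.exp_nat_mul]
  congr 1
  ring

private lemma im_mul_pos (z : ℂ) (hz : 0 < z.im) (C : ℕ) (hC : 0 < C) :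
    0 < ((C:ℂ)*z).im := by
  have : ((C:ℂ)*z).im = C * z.im := by
    simp [Complex.mul_im]
  rw [this]
  have : (0:ℝ) < C := by exact_mod_cast hC
  positivity

private lemma summable_norm_pow (k : ℝ) (z : ℂ) (hz : 0 < z.im) (C : ℕ) (hC : 0 < C) :
    Summable (fun n : ℕ+ => ‖aco k n * Aq (xe z n ^ C)‖) := by
  have := summable_norm_aux k ((C:ℂ)*z) (im_mul_pos z hz C hC)
  apply this.congr
  intro n
  rw [xe_pow]
  rfl

private lemma summable_pow (k : ℝ) (z : ℂ) (hz : 0 < z.im) (C : ℕ) (hC : 0 < C) :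
    Summable (fun n : ℕ+ => aco k n * Aq (xe z n ^ C)) :=
  (summable_norm_pow k z hz C hC).of_norm

/-- the series of Q -/
private noncomputable def Qs (k : ℝ) (z : ℂ) (C : ℕ) : ℂ :=
  ∑' m : ℕ+, aco k m * Aq (xe z m ^ C)

private lemma Qs_eq_P (k : ℝ) (z : ℂ) (C : ℕ) : Qs k z C = P k ((C:ℂ) * z) := by
  unfold Qs P aco Aq
  apply tsum_congr
  intro n
  rw [xe_pow]

/-- atoms with divisibility condition -/
private lemma pnat_mul_injective (d : ℕ+) : Function.Injective (fun m : ℕ+ => d * m) := by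
  intro m1 m2 h
  have : (d:ℕ) * (m1:ℕ) = (d:ℕ) * (m2:ℕ) := by exact_mod_cast congrArg PNat.val h
  exact PNat.coe_injective (Nat.eq_of_mul_eq_mul_left d.pos this)

private lemma aco_mul (k : ℝ) (d m : ℕ+) :
    aco k (d * m) = (((d:ℝ) ^ (-k) : ℝ) : ℂ) * aco k m := by
  unfold aco
  have h1 : (((d * m : ℕ+)) : ℂ) = (((d:ℕ) : ℂ)) * (((m:ℕ)) : ℂ) := by
    push_cast
    rfl
  rw [h1, Complex.natCast_mul_natCast_cpow]
  congr 1
  rw [show (((d:ℕ):ℂ)) = ((((d:ℕ):ℝ)):ℂ) by push_cast; ring,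
    show -(k:ℂ) = ((-k : ℝ):ℂ) by push_cast; ring,
    ← Complex.ofReal_cpow (by positivity : (0:ℝ) ≤ ((d:ℕ):ℝ))]

private lemma xe_mul (z : ℂ) (d m : ℕ+) (c : ℕ) :
    xe z (d * m) ^ c = xe z m ^ ((d:ℕ) * c) := by
  unfold xe
  rw [← Complex.exp_nat_mul, ← Complex.exp_nat_mul]
  congr 1
  push_cast
  ring

private lemma hasSum_atom (k : ℝ) (z : ℂ) (hz : 0 < z.im) (d c : ℕ+) :
    HasSum (fun n : ℕ+ => if (d:ℕ) ∣ (n:ℕ) then aco k n * Aq (xe z n ^ (c:ℕ)) else 0)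
      ((((d:ℝ) ^ (-k) : ℝ) : ℂ) * Qs k z ((d:ℕ) * (c:ℕ))) := by
  have hsum : Summable (fun m : ℕ+ => aco k m * Aq (xe z m ^ ((d:ℕ)*(c:ℕ)))) :=
    summable_pow k z hz _ (by positivity)
  have h1 := hsum.hasSum.mul_left ((((d:ℝ) ^ (-k) : ℝ) : ℂ))
  have hv : ∀ n : ℕ+, n ∉ Set.range (fun m : ℕ+ => d*m) →
      (if (d:ℕ) ∣ (n:ℕ) then aco k n * Aq (xe z n ^ (c:ℕ)) else 0) = 0 := by
    intro n hn
    rw [if_neg]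
    intro hdvd
    apply hn
    obtain ⟨t, ht⟩ := hdvd
    have htpos : 0 < t := by
      rcases Nat.eq_zero_or_pos t with h | h
      · rw [h, mul_zero] at ht; exact absurd ht n.pos.ne'
      · exact h
    exact ⟨⟨t, htpos⟩, by apply PNat.coe_injective; simp [ht]; rfl⟩
  have key : HasSum (fun m : ℕ+ =>
      (if (d:ℕ) ∣ (((d*m : ℕ+)):ℕ) then aco k (d*m) * Aq (xe z (d*m) ^ (c:ℕ)) else 0))
      ((((d:ℝ) ^ (-k) : ℝ) : ℂ) * Qs k z ((d:ℕ) * (c:ℕ))) := by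
    have heq : (fun m : ℕ+ =>
        (if (d:ℕ) ∣ (((d*m : ℕ+)):ℕ) then aco k (d*m) * Aq (xe z (d*m) ^ (c:ℕ)) else 0))
        = (fun m : ℕ+ => (((d:ℝ) ^ (-k) : ℝ) : ℂ) * (aco k m * Aq (xe z m ^ ((d:ℕ)*(c:ℕ))))) := by
      funext m
      rw [if_pos (by exact_mod_cast Dvd.intro _ rfl : (d:ℕ) ∣ ((d*m : ℕ+) : ℕ))]
      rw [aco_mul, xe_mul]
      ring
    rw [heq]
    exact h1
  exact ((pnat_mul_injective d).hasSum_iff hv).mp key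

-- new material
private noncomputable def ζ6 : ℂ := Complex.exp (π*I/3)

private lemma zeta_cube : ζ6^3 = -1 := by
  unfold ζ6
  rw [← Complex.exp_nat_mul]
  rw [show (3:ℕ) * ((π:ℂ)*I/3) = π*I by push_cast; ring]
  exact Complex.exp_pi_mul_I

private lemma zeta_six : ζ6^6 = 1 := by
  have : ζ6^6 = (ζ6^3)^2 := by ring
  rw [this, zeta_cube]; ring

private lemma zeta_norm : ‖ζ6‖ = 1 := by
  unfold ζ6
  rw [Complex.norm_exp]
  rw [show ((π:ℂ)*I/3).re = 0 by simp [Complex.div_re]]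
  exact Real.exp_zero

private lemma omega_cube : (ζ6^2)^3 = 1 := by
  rw [show (ζ6^2)^3 = (ζ6^3)^2 by ring, zeta_cube]; ring

private lemma omega_ne_one : ζ6^2 ≠ 1 := by
  unfold ζ6
  rw [← Complex.exp_nat_mul]
  intro h
  have him : (Complex.exp ((2:ℕ)*((π:ℂ)*I/3))).im = 0 := by rw [h]; rfl
  rw [show ((2:ℕ):ℂ)*((π:ℂ)*I/3) = ((2*π/3 : ℝ):ℂ) * I by push_cast; ring] at him
  rw [Complex.exp_ofReal_mul_I_im] at him
  have : 0 < Real.sin (2*π/3) := by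
    apply Real.sin_pos_of_pos_of_lt_pi
    · positivity
    · nlinarith [Real.pi_pos]
  linarith [him ▸ this]

private lemma omega_sum : 1 + ζ6^2 + (ζ6^2)^2 = 0 := by
  have h3 : (ζ6^2)^3 - 1 = 0 := by rw [omega_cube]; ring
  have hfac : (ζ6^2 - 1) * (1 + ζ6^2 + (ζ6^2)^2) = 0 := by linear_combination h3
  rcases mul_eq_zero.1 hfac with h | h
  · exact absurd (by linear_combination h) omega_ne_one
  · exact h

private lemma one_add_ne {u : ℂ} (h : ‖u‖ < 1) : 1 + u ≠ 0 := by
  have := one_sub_ne_s11 (by rwa [norm_neg] : ‖-u‖ < 1)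
  rwa [sub_neg_eq_add] at this

private lemma norm_zeta_mul (j : ℕ) (u : ℂ) : ‖ζ6^j * u‖ = ‖u‖ := by
  rw [norm_mul, norm_pow, zeta_norm, one_pow, one_mul]

private lemma key1 (x : ℂ) (hx : ‖x‖ < 1) :
    Aq (ζ6*x) + Aq (ζ6^5*x) = 6*Aq (x^6) - 3*Aq (x^3) - 2*Aq (x^2) + Aq x := by
  have hxc : ∀ c : ℕ, 0 < c → ‖x^c‖ < 1 := by
    intro c hc
    rw [norm_pow]
    exact pow_lt_one₀ (norm_nonneg x) hx hc.ne'
  have h1 : 1 - x ≠ 0 := one_sub_ne_s11 hx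
  have hnx : ‖-x‖ < 1 := by rwa [norm_neg]
  have h3x := i3 (ζ6^2) (-x) omega_cube omega_sum
    (one_sub_ne_s11 hnx)
    (one_sub_ne_s11 (by rw [norm_zeta_mul 2 (-x)]; exact hnx))
    (one_sub_ne_s11 (by rw [show (ζ6^2)^2*(-x) = ζ6^4*(-x) by ring, norm_zeta_mul 4 (-x)]; exact hnx))
  rw [show ζ6^2 * (-x) = ζ6^5 * x by linear_combination (-x*ζ6^2) * zeta_cube] at h3x
  rw [show (ζ6^2)^2 * (-x) = ζ6 * x by linear_combination (-x*ζ6) * zeta_cube] at h3x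
  rw [show (-x)^3 = -(x^3) by ring] at h3x
  have h2a := i2 x h1 (one_add_ne hx)
  have h2b := i2 (x^3) (one_sub_ne_s11 (hxc 3 (by norm_num))) (one_add_ne (hxc 3 (by norm_num)))
  rw [show (x^3)^2 = x^6 by ring] at h2b
  linear_combination h3x - h2a + 3*h2b

private lemma zeta_red (q s : ℕ) : ζ6^(6*q+s) = ζ6^s := by
  rw [pow_add, pow_mul, zeta_six, one_pow, one_mul]

private lemma exp_plus (z : ℂ) (n : ℕ+) :
    Complex.exp (2*π*I*n*(z + 1/6)) = ζ6^(n:ℕ) * xe z n := by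
  unfold ζ6 xe
  rw [← Complex.exp_nat_mul, ← Complex.exp_add]
  congr 1
  push_cast
  ring

private lemma exp_minus (z : ℂ) (n : ℕ+) :
    Complex.exp (2*π*I*n*(z - 1/6)) = ζ6^(5*(n:ℕ)) * xe z n := by
  have : Complex.exp (2*π*I*n*(z - 1/6)) * ζ6^(n:ℕ) = ζ6^(5*(n:ℕ)) * xe z n * ζ6^(n:ℕ) := by
    unfold ζ6 xe
    rw [← Complex.exp_nat_mul, ← Complex.exp_nat_mul, ← Complex.exp_add, ← Complex.exp_add,
      ← Complex.exp_add]
    rw [show 2*(π:ℂ)*I*n*(z - 1/6) + (n:ℕ)*((π:ℂ)*I/3) = 2*(π:ℂ)*I*n*z from by push_cast; ring]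
    rw [show (5*(n:ℕ):ℕ)*((π:ℂ)*I/3) + 2*(π:ℂ)*I*n*z + (n:ℕ)*((π:ℂ)*I/3) =
      2*(π:ℂ)*I*n*z + (n:ℕ)*(2*(π:ℂ)*I) from by push_cast; ring]
    rw [Complex.exp_add]
    rw [Complex.exp_nat_mul, Complex.exp_two_pi_mul_I, one_pow, mul_one]
  have hnz : ζ6^(n:ℕ) ≠ 0 := pow_ne_zero _ (Complex.exp_ne_zero _)
  exact mul_right_cancel₀ hnz this

private lemma pointwise (z : ℂ) (hz : 0 < z.im) (n : ℕ+) :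
    Aq (Complex.exp (2*π*I*n*(z - 1/6))) + Aq (Complex.exp (2*π*I*n*(z + 1/6)))
      = (6*Aq (xe z n^6) - 3*Aq (xe z n^3) - 2*Aq (xe z n^2) + Aq (xe z n^1))
        + (if 2 ∣ (n:ℕ) then
            (-6)*Aq (xe z n^6) + 6*Aq (xe z n^3) + 2*Aq (xe z n^2) - 2*Aq (xe z n^1) else 0)
        + (if 3 ∣ (n:ℕ) then
            (-6)*Aq (xe z n^6) + 3*Aq (xe z n^3) + 6*Aq (xe z n^2) - 3*Aq (xe z n^1) else 0)
        + (if 6 ∣ (n:ℕ) then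
            6*Aq (xe z n^6) - 6*Aq (xe z n^3) - 6*Aq (xe z n^2) + 6*Aq (xe z n^1) else 0) := by
  set x : ℂ := xe z n with hxdef
  have hx : ‖x‖ < 1 := norm_e_lt n z hz
  have hxc : ∀ c : ℕ, 0 < c → ‖x^c‖ < 1 := by
    intro c hc
    rw [norm_pow]
    exact pow_lt_one₀ (norm_nonneg x) hx hc.ne'
  rw [exp_plus, exp_minus, ← hxdef, pow_one]
  set q : ℕ := (n:ℕ) / 6 with hq
  set r : ℕ := (n:ℕ) % 6 with hrdef
  have hn6 : (n:ℕ) = 6*q + r := by rw [hq, hrdef]; omega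
  have hnpos : 0 < (n:ℕ) := n.pos
  have hr6 : r < 6 := by omega
  have hζn : ζ6^(n:ℕ) = ζ6^r := by rw [hn6, zeta_red]
  interval_cases r
  · -- r = 0
    rw [if_pos (by omega : 2 ∣ (n:ℕ)), if_pos (by omega : 3 ∣ (n:ℕ)),
      if_pos (by omega : 6 ∣ (n:ℕ))]
    have h5 : ζ6^(5*(n:ℕ)) = ζ6^0 := by rw [show 5*(n:ℕ) = 6*(5*q)+0 by omega, zeta_red]
    rw [hζn, h5, pow_zero, one_mul]
    ring
  · -- r = 1
    rw [if_neg (by omega : ¬ 2 ∣ (n:ℕ)), if_neg (by omega : ¬ 3 ∣ (n:ℕ)),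
      if_neg (by omega : ¬ 6 ∣ (n:ℕ))]
    have h5 : ζ6^(5*(n:ℕ)) = ζ6^5 := by rw [show 5*(n:ℕ) = 6*(5*q)+5 by omega, zeta_red]
    rw [hζn, h5, pow_one]
    have := key1 x hx
    linear_combination this
  · -- r = 2
    rw [if_pos (by omega : 2 ∣ (n:ℕ)), if_neg (by omega : ¬ 3 ∣ (n:ℕ)),
      if_neg (by omega : ¬ 6 ∣ (n:ℕ))]
    have h5 : ζ6^(5*(n:ℕ)) = ζ6^4 := by rw [show 5*(n:ℕ) = 6*(5*q+1)+4 by omega, zeta_red]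
    rw [hζn, h5]
    have h3x := i3 (ζ6^2) x omega_cube omega_sum (one_sub_ne_s11 hx)
      (one_sub_ne_s11 (by rw [norm_zeta_mul 2 x]; exact hx))
      (one_sub_ne_s11 (by rw [show (ζ6^2)^2*x = ζ6^4*x by ring, norm_zeta_mul 4 x]; exact hx))
    rw [show (ζ6^2)^2*x = ζ6^4*x by ring] at h3x
    linear_combination h3x
  · -- r = 3
    rw [if_neg (by omega : ¬ 2 ∣ (n:ℕ)), if_pos (by omega : 3 ∣ (n:ℕ)),
      if_neg (by omega : ¬ 6 ∣ (n:ℕ))]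
    have h5 : ζ6^(5*(n:ℕ)) = ζ6^3 := by rw [show 5*(n:ℕ) = 6*(5*q+2)+3 by omega, zeta_red]
    rw [hζn, h5, zeta_cube]
    have h2a := i2 x (one_sub_ne_s11 hx) (one_add_ne hx)
    rw [show -1 * x = -x by ring]
    linear_combination 2 * h2a
  · -- r = 4
    rw [if_pos (by omega : 2 ∣ (n:ℕ)), if_neg (by omega : ¬ 3 ∣ (n:ℕ)),
      if_neg (by omega : ¬ 6 ∣ (n:ℕ))]
    have h5 : ζ6^(5*(n:ℕ)) = ζ6^2 := by rw [show 5*(n:ℕ) = 6*(5*q+3)+2 by omega, zeta_red]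
    rw [hζn, h5]
    have h3x := i3 (ζ6^2) x omega_cube omega_sum (one_sub_ne_s11 hx)
      (one_sub_ne_s11 (by rw [norm_zeta_mul 2 x]; exact hx))
      (one_sub_ne_s11 (by rw [show (ζ6^2)^2*x = ζ6^4*x by ring, norm_zeta_mul 4 x]; exact hx))
    rw [show (ζ6^2)^2*x = ζ6^4*x by ring] at h3x
    linear_combination h3x
  · -- r = 5
    rw [if_neg (by omega : ¬ 2 ∣ (n:ℕ)), if_neg (by omega : ¬ 3 ∣ (n:ℕ)),
      if_neg (by omega : ¬ 6 ∣ (n:ℕ))]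
    have h5 : ζ6^(5*(n:ℕ)) = ζ6^1 := by rw [show 5*(n:ℕ) = 6*(5*q+4)+1 by omega, zeta_red]
    rw [hζn, h5, pow_one]
    have := key1 x hx
    linear_combination this

theorem sextupling (k : ℝ) (z : ℂ) (hz : 0 < z.im) :
    P k (z - 1 / 6) + P k (z + 1 / 6) =
      P k z + (((2 : ℝ) ^ (1 - k) : ℝ) : ℂ) * P k (4 * z)
        + (((3 : ℝ) ^ (1 - k) : ℝ) : ℂ) * P k (9 * z)
        - ((((2 : ℝ) ^ k : ℝ) : ℂ) + 1) *
            ((((2 : ℝ) ^ (1 - k) : ℝ) : ℂ) * P k (2 * z)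
              + (((6 : ℝ) ^ (1 - k) : ℝ) : ℂ) * P k (18 * z))
        - ((((3 : ℝ) ^ k : ℝ) : ℂ) + 1) *
            ((((3 : ℝ) ^ (1 - k) : ℝ) : ℂ) * P k (3 * z)
              + (((6 : ℝ) ^ (1 - k) : ℝ) : ℂ) * P k (12 * z))
        + (((6 : ℝ) ^ (1 - k) : ℝ) : ℂ) *
            (((((2 : ℝ) ^ k : ℝ) : ℂ) + 1) * ((((3 : ℝ) ^ k : ℝ) : ℂ) + 1) * P k (6 * z)
              + P k (36 * z)) := by
  -- base HasSums
  have hQ : ∀ C : ℕ, 0 < C → HasSum (fun n : ℕ+ => aco k n * Aq (xe z n ^ C)) (Qs k z C) :=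
    fun C hC => (summable_pow k z hz C hC).hasSum
  have hQ6 := hQ 6 (by norm_num)
  have hQ3 := hQ 3 (by norm_num)
  have hQ2 := hQ 2 (by norm_num)
  have hQ1 := hQ 1 (by norm_num)
  have hbase := (((hQ6.mul_left 6).sub (hQ3.mul_left 3)).sub (hQ2.mul_left 2)).add hQ1
  have a26 := hasSum_atom k z hz 2 6
  have a23 := hasSum_atom k z hz 2 3
  have a22 := hasSum_atom k z hz 2 2
  have a21 := hasSum_atom k z hz 2 1
  have a36 := hasSum_atom k z hz 3 6
  have a33 := hasSum_atom k z hz 3 3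
  have a32 := hasSum_atom k z hz 3 2
  have a31 := hasSum_atom k z hz 3 1
  have a66 := hasSum_atom k z hz 6 6
  have a63 := hasSum_atom k z hz 6 3
  have a62 := hasSum_atom k z hz 6 2
  have a61 := hasSum_atom k z hz 6 1
  have hg2 := (((a26.mul_left (-6)).add (a23.mul_left 6)).add (a22.mul_left 2)).sub
    (a21.mul_left 2)
  have hg3 := (((a36.mul_left (-6)).add (a33.mul_left 3)).add (a32.mul_left 6)).sub
    (a31.mul_left 3)
  have hg6 := (((a66.mul_left 6).sub (a63.mul_left 6)).sub (a62.mul_left 6)).add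
    (a61.mul_left 6)
  have Htot := ((hbase.add hg2).add hg3).add hg6
  -- identify the function
  have sm1 : Summable (fun n : ℕ+ => aco k n * Aq (Complex.exp (2*π*I*n*(z - 1/6)))) := by
    have him : 0 < (z - 1/6 : ℂ).im := by
      simp only [Complex.sub_im, Complex.div_im]
      norm_num
      exact hz
    exact (summable_norm_aux k (z - 1/6) him).of_norm
  have sm2 : Summable (fun n : ℕ+ => aco k n * Aq (Complex.exp (2*π*I*n*(z + 1/6)))) := by
    have him : 0 < (z + 1/6 : ℂ).im := by
      simp only [Complex.add_im, Complex.div_im]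
      norm_num
      exact hz
    exact (summable_norm_aux k (z + 1/6) him).of_norm
  have hP : ∀ w : ℂ, P k w = ∑' n : ℕ+, aco k n * Aq (Complex.exp (2*π*I*n*w)) := fun w => rfl
  have hLHS : P k (z - 1/6) + P k (z + 1/6)
      = ∑' n : ℕ+, (aco k n * Aq (Complex.exp (2*π*I*n*(z - 1/6)))
          + aco k n * Aq (Complex.exp (2*π*I*n*(z + 1/6)))) := by
    rw [hP, hP, ← Summable.tsum_add sm1 sm2]
  have hfun : (fun n : ℕ+ => aco k n * Aq (Complex.exp (2*π*I*n*(z - 1/6)))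
          + aco k n * Aq (Complex.exp (2*π*I*n*(z + 1/6))))
      = (fun n : ℕ+ =>
          (6*(aco k n * Aq (xe z n^6)) - 3*(aco k n * Aq (xe z n^3))
            - 2*(aco k n * Aq (xe z n^2)) + aco k n * Aq (xe z n^1))
          + ((-6)*(if (2:ℕ) ∣ (n:ℕ) then aco k n * Aq (xe z n ^ 6) else 0)
              + 6*(if (2:ℕ) ∣ (n:ℕ) then aco k n * Aq (xe z n ^ 3) else 0)
              + 2*(if (2:ℕ) ∣ (n:ℕ) then aco k n * Aq (xe z n ^ 2) else 0)
              - 2*(if (2:ℕ) ∣ (n:ℕ) then aco k n * Aq (xe z n ^ 1) else 0))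
          + ((-6)*(if (3:ℕ) ∣ (n:ℕ) then aco k n * Aq (xe z n ^ 6) else 0)
              + 3*(if (3:ℕ) ∣ (n:ℕ) then aco k n * Aq (xe z n ^ 3) else 0)
              + 6*(if (3:ℕ) ∣ (n:ℕ) then aco k n * Aq (xe z n ^ 2) else 0)
              - 3*(if (3:ℕ) ∣ (n:ℕ) then aco k n * Aq (xe z n ^ 1) else 0))
          + (6*(if (6:ℕ) ∣ (n:ℕ) then aco k n * Aq (xe z n ^ 6) else 0)
              - 6*(if (6:ℕ) ∣ (n:ℕ) then aco k n * Aq (xe z n ^ 3) else 0)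
              - 6*(if (6:ℕ) ∣ (n:ℕ) then aco k n * Aq (xe z n ^ 2) else 0)
              + 6*(if (6:ℕ) ∣ (n:ℕ) then aco k n * Aq (xe z n ^ 1) else 0))) := by
    funext n
    rw [← mul_add, pointwise z hz n]
    split_ifs <;> ring
  have hV : P k (z - 1/6) + P k (z + 1/6)
      = (6*Qs k z 6 - 3*Qs k z 3 - 2*Qs k z 2 + Qs k z 1)
        + ((-6)*((((2:ℝ)^(-k):ℝ):ℂ) * Qs k z 12) + 6*((((2:ℝ)^(-k):ℝ):ℂ) * Qs k z 6)
            + 2*((((2:ℝ)^(-k):ℝ):ℂ) * Qs k z 4) - 2*((((2:ℝ)^(-k):ℝ):ℂ) * Qs k z 2))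
        + ((-6)*((((3:ℝ)^(-k):ℝ):ℂ) * Qs k z 18) + 3*((((3:ℝ)^(-k):ℝ):ℂ) * Qs k z 9)
            + 6*((((3:ℝ)^(-k):ℝ):ℂ) * Qs k z 6) - 3*((((3:ℝ)^(-k):ℝ):ℂ) * Qs k z 3))
        + (6*((((6:ℝ)^(-k):ℝ):ℂ) * Qs k z 36) - 6*((((6:ℝ)^(-k):ℝ):ℂ) * Qs k z 18)
            - 6*((((6:ℝ)^(-k):ℝ):ℂ) * Qs k z 12) + 6*((((6:ℝ)^(-k):ℝ):ℂ) * Qs k z 6)) := by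
    rw [hLHS, hfun]
    exact Htot.tsum_eq
  -- convert Qs to P
  simp only [Qs_eq_P] at hV
  norm_num at hV
  -- coefficient identities
  have e2 : (((2:ℝ)^(1-k):ℝ):ℂ) = 2 * (((2:ℝ)^(-k):ℝ):ℂ) := by
    rw [show (1:ℝ) - k = 1 + (-k) by ring, Real.rpow_add (by norm_num : (0:ℝ) < 2),
      Real.rpow_one]
    push_cast
    ring
  have e3 : (((3:ℝ)^(1-k):ℝ):ℂ) = 3 * (((3:ℝ)^(-k):ℝ):ℂ) := by
    rw [show (1:ℝ) - k = 1 + (-k) by ring, Real.rpow_add (by norm_num : (0:ℝ) < 3),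
      Real.rpow_one]
    push_cast
    ring
  have e6 : (((6:ℝ)^(1-k):ℝ):ℂ) = 6 * (((6:ℝ)^(-k):ℝ):ℂ) := by
    rw [show (1:ℝ) - k = 1 + (-k) by ring, Real.rpow_add (by norm_num : (0:ℝ) < 6),
      Real.rpow_one]
    push_cast
    ring
  have m2 : (((2:ℝ)^k:ℝ):ℂ) * (((2:ℝ)^(-k):ℝ):ℂ) = 1 := by
    rw [← Complex.ofReal_mul, ← Real.rpow_add (by norm_num : (0:ℝ) < 2)]
    norm_num
  have m3 : (((3:ℝ)^k:ℝ):ℂ) * (((3:ℝ)^(-k):ℝ):ℂ) = 1 := by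
    rw [← Complex.ofReal_mul, ← Real.rpow_add (by norm_num : (0:ℝ) < 3)]
    norm_num
  have h623 : (((6:ℝ)^(-k):ℝ):ℂ) = (((2:ℝ)^(-k):ℝ):ℂ) * (((3:ℝ)^(-k):ℝ):ℂ) := by
    rw [← Complex.ofReal_mul, ← Real.mul_rpow (by norm_num) (by norm_num)]
    norm_num
  rw [e2, e3, e6]
  linear_combination hV
    + (2*P k (2*z) + 6*(((3:ℝ)^(-k):ℝ):ℂ)*P k (18*z)
        - (6*(((3:ℝ)^k:ℝ):ℂ)*(((3:ℝ)^(-k):ℝ):ℂ) + 6*(((3:ℝ)^(-k):ℝ):ℂ))*P k (6*z))*m2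
    + (3*P k (3*z) + 6*(((2:ℝ)^(-k):ℝ):ℂ)*P k (12*z)
        - (6 + 6*(((2:ℝ)^(-k):ℝ):ℂ))*P k (6*z))*m3
    + (6*(((2:ℝ)^k:ℝ):ℂ)*P k (18*z) + 6*(((3:ℝ)^k:ℝ):ℂ)*P k (12*z)
        - (6*(((2:ℝ)^k:ℝ):ℂ)*(((3:ℝ)^k:ℝ):ℂ) + 6*(((2:ℝ)^k:ℝ):ℂ)
            + 6*(((3:ℝ)^k:ℝ):ℂ))*P k (6*z))*h623
end
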